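/- arXiv:1302.2756 — 3 statements merged into one kernel-verified Lean document; each statement's English description precedes it below -/
import Mathlib

section
/- Let m > 0 and let ρ : ℝ³ → ℝ be a Schwartz function. Define the 3×3 coupling matrix K_m by K_{m,ij} = (2π)^{-3} ∫_{ℝ³} k_i k_j |ρ̂(k)|² / (|k|² + m²) dk, where ρ̂(k) = ∫_{ℝ³} e^{i k·x} ρ(x) dx. Then for every v ∈ ℝ³: 0 ≤ v · K_m v ≤ m^{-2} ‖∇ρ‖²_{L²} |v|². Consequently, if ω > 0 and ‖∇ρ‖²_{L²(ℝ³)} < m² ω², then the matrix ω² I − K_m is positive definite, i.e. v · (ω² I − K_m) v > 0 for every v ≠ 0. -/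
open MeasureTheory RealInnerProductSpace FourierTransform SchwartzMap Complex

noncomputable section

namespace CouplingAux

local notation "V" => EuclideanSpace ℝ (Fin 3)

variable {F G : Type*} [NormedAddCommGroup F] [NormedSpace ℝ F]
  [NormedAddCommGroup G] [NormedSpace ℝ G]

/-- Postcomposition of a Schwartz map with a continuous linear map. -/
def postCLM (T : F →L[ℝ] G) : 𝓢(V, F) →L[ℝ] 𝓢(V, G) :=
  SchwartzMap.bilinLeftCLM ((ContinuousLinearMap.lsmul ℝ ℝ : ℝ →L[ℝ] G →L[ℝ] G).flip.comp T)
    (Function.HasTemperateGrowth.const (1 : ℝ))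

lemma postCLM_apply (T : F →L[ℝ] G) (f : 𝓢(V, F)) (x : V) :
    postCLM T f x = T (f x) := by
  simp only [postCLM, SchwartzMap.bilinLeftCLM]
  exact one_smul ℝ _


lemma bound0 (g : 𝓢(V, G)) : ∃ C : ℝ, 0 ≤ C ∧ ∀ x, ‖g x‖ ≤ C := by
  obtain ⟨C, hC⟩ := g.decay' 0 0
  refine ⟨C, le_trans (norm_nonneg (g 0)) ?_, fun x => ?_⟩
  · have h := hC 0; simp at h; exact h
  · have h := hC x; simp at h; exact h

/-- Integrability of `w · ‖g‖²` for a weight of quadratic growth. -/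
lemma integrable_weight (g : 𝓢(V, ℂ)) {w : V → ℝ} (hw : Continuous w) {C : ℝ}
    (hb : ∀ ξ, |w ξ| ≤ C * ‖ξ‖ ^ 2) :
    Integrable (fun ξ => w ξ * ‖g ξ‖ ^ 2) := by
  obtain ⟨D, hD0, hD⟩ := bound0 g
  have h1 : Integrable (fun ξ : V => (C * D) * (‖ξ‖ ^ 2 * ‖g ξ‖)) :=
    (g.integrable_pow_mul volume 2).const_mul _
  refine h1.mono' ((hw.mul ((g.continuous.norm).pow 2)).aestronglyMeasurable) ?_
  filter_upwards with ξ
  have h2 : ‖w ξ * ‖g ξ‖ ^ 2‖ = |w ξ| * ‖g ξ‖ ^ 2 := by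
    simp [Real.norm_eq_abs, abs_mul, abs_pow, abs_norm]
  rw [h2]
  calc |w ξ| * ‖g ξ‖ ^ 2 ≤ (C * ‖ξ‖ ^ 2) * (‖g ξ‖ * D) := by
        apply mul_le_mul (hb ξ) ?_ (by positivity) ?_
        · rw [sq]; exact mul_le_mul_of_nonneg_left (hD ξ) (norm_nonneg _)
        · have := (abs_nonneg (w ξ)).trans (hb ξ)
          positivity
    _ = C * D * (‖ξ‖ ^ 2 * ‖g ξ‖) := by ring

lemma integrable_normsq (g : 𝓢(V, ℂ)) : Integrable (fun x => ‖g x‖ ^ 2) := by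
  obtain ⟨D, hD0, hD⟩ := bound0 g
  refine (g.integrable.norm.const_mul D).mono'
    ((g.continuous.norm.pow 2).aestronglyMeasurable) ?_
  filter_upwards with x
  calc ‖‖g x‖ ^ 2‖ = ‖g x‖ ^ 2 := by rw [Real.norm_eq_abs, _root_.abs_pow, abs_norm]
    _ ≤ D * ‖g x‖ := by rw [sq]; exact mul_le_mul_of_nonneg_right (hD x) (norm_nonneg _)

lemma fourier_conj (g : V → ℂ) (x : V) :
    𝓕 (fun ξ => (starRingEnd ℂ) (g ξ)) x = (starRingEnd ℂ) (𝓕⁻ g x) := by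
  rw [Real.fourier_eq', Real.fourierInv_eq', ← integral_conj]
  congr 1
  ext ξ
  rw [smul_eq_mul, smul_eq_mul, map_mul, ← Complex.exp_conj]
  congr 1
  simp only [map_mul, Complex.conj_ofReal, Complex.conj_I]
  push_cast
  ring

/-- The real conjugation as a continuous linear map on `ℂ`. -/
def conjCLM : ℂ →L[ℝ] ℂ := (starL' ℝ : ℂ ≃L[ℝ] ℂ).toContinuousLinearMap

lemma conjCLM_apply (z : ℂ) : conjCLM z = (starRingEnd ℂ) z := rfl

lemma flip_innerₗ : (innerₗ V).flip = innerₗ V := by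
  apply LinearMap.ext; intro x; apply LinearMap.ext; intro y
  rw [LinearMap.flip_apply, innerₗ_apply_apply, innerₗ_apply_apply]
  exact real_inner_comm x y

/-- Plancherel's theorem for Schwartz functions. -/
lemma plancherel (f : 𝓢(V, ℂ)) : ∫ ξ, ‖𝓕 (⇑f) ξ‖ ^ 2 = ∫ x, ‖f x‖ ^ 2 := by
  set F : 𝓢(V, ℂ) := fourierTransformCLM ℝ f with hF
  have hFc : ⇑F = 𝓕 ⇑f := rfl
  set G : 𝓢(V, ℂ) := postCLM conjCLM F with hG
  have hGc : ∀ ξ, G ξ = (starRingEnd ℂ) (F ξ) := fun ξ => postCLM_apply _ _ _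
  have key : ∫ ξ, 𝓕 (⇑f) ξ • G ξ = ∫ x, f x • 𝓕 (⇑G) x := by
    have h := VectorFourier.integral_fourierIntegral_smul_eq_flip
      (L := innerₗ V) (μ := (volume : Measure V)) (ν := (volume : Measure V))
      Real.continuous_fourierChar (by exact continuous_inner) f.integrable G.integrable
    rw [flip_innerₗ] at h
    exact h
  have hGF : ∀ x, 𝓕 (⇑G) x = (starRingEnd ℂ) (f x) := by
    intro x
    have h1 : ⇑G = fun ξ => (starRingEnd ℂ) (F ξ) := funext hGc
    rw [h1, fourier_conj]
    congr 1
    rw [hFc]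
    exact f.integrable.fourierInv_fourier_eq F.integrable f.continuous.continuousAt
  have key2 : ∫ ξ, ((‖𝓕 (⇑f) ξ‖ ^ 2 : ℝ) : ℂ) = ∫ x, ((‖f x‖ ^ 2 : ℝ) : ℂ) := by
    have e1 : ∀ ξ, 𝓕 (⇑f) ξ • G ξ = ((‖𝓕 (⇑f) ξ‖ ^ 2 : ℝ) : ℂ) := by
      intro ξ
      rw [smul_eq_mul, hGc ξ, hFc]
      push_cast
      exact Complex.mul_conj' _
    have e2 : ∀ x, f x • 𝓕 (⇑G) x = ((‖f x‖ ^ 2 : ℝ) : ℂ) := by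
      intro x
      rw [smul_eq_mul, hGF x]
      push_cast
      exact Complex.mul_conj' _
    rw [← funext e1, ← funext e2]
    exact key
  have key3 : ∫ ξ, (RCLike.ofReal (‖𝓕 (⇑f) ξ‖ ^ 2) : ℂ) = ∫ x, (RCLike.ofReal (‖f x‖ ^ 2) : ℂ) := key2
  rw [integral_ofReal, integral_ofReal] at key3
  exact_mod_cast key3


lemma normsq_eq (ξ : V) : ‖ξ‖ ^ 2 = ∑ i, ξ i ^ 2 := by
  rw [EuclideanSpace.norm_eq, Real.sq_sqrt (by positivity)]
  simp [Real.norm_eq_abs, _root_.sq_abs]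

lemma norm_fourier_pderiv (σ : 𝓢(V, ℂ)) (l : Fin 3) (ξ : V) :
    ‖𝓕 (⇑(SchwartzMap.evalCLM ℝ V ℂ (EuclideanSpace.single l 1) (fderivCLM ℝ V ℂ σ))) ξ‖ ^ 2
      = (2 * Real.pi) ^ 2 * (ξ l) ^ 2 * ‖𝓕 (⇑σ) ξ‖ ^ 2 := by
  have hd : Integrable (fderiv ℝ ⇑σ) := by
    have h : ⇑(fderivCLM ℝ V ℂ σ) = fderiv ℝ ⇑σ := funext fun x => rfl
    rw [← h]; exact (fderivCLM ℝ V ℂ σ).integrable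
  have h1 : ⇑(SchwartzMap.evalCLM ℝ V ℂ (EuclideanSpace.single l 1) (fderivCLM ℝ V ℂ σ))
      = fun x => fderiv ℝ (⇑σ) x (EuclideanSpace.single l 1) :=
    funext fun x => rfl
  rw [h1, ← Real.fourier_continuousLinearMap_apply hd,
    Real.fourier_fderiv σ.integrable σ.differentiable hd,
    VectorFourier.fourierSMulRight_apply]
  have h2 : ((-innerSL ℝ) ξ) (EuclideanSpace.single l 1) = -(ξ l) := by
    simp [EuclideanSpace.inner_single_right, real_inner_comm]
  rw [h2]
  rw [norm_smul, norm_smul]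
  have h3 : ‖-(2 * Real.pi * Complex.I)‖ = 2 * Real.pi := by
    simp [_root_.abs_of_nonneg Real.pi_nonneg]
  rw [h3, Real.norm_eq_abs, abs_neg]
  have h4 : (2 * Real.pi * (|ξ l| * ‖𝓕 (⇑σ) ξ‖)) ^ 2
      = (2 * Real.pi) ^ 2 * (|ξ l| ^ 2 * ‖𝓕 (⇑σ) ξ‖ ^ 2) := by ring
  rw [h4, _root_.sq_abs]
  ring

lemma energy_eq (ρ : 𝓢(V, ℝ)) (σ : 𝓢(V, ℂ)) (hσ : ∀ x, σ x = (ρ x : ℂ)) :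
    ∫ x, ∑ l, (fderiv ℝ (⇑ρ) x (EuclideanSpace.single l 1)) ^ 2
      = (2 * Real.pi) ^ 2 * ∫ ξ, ‖ξ‖ ^ 2 * ‖𝓕 (⇑σ) ξ‖ ^ 2 := by
  have hderiv : ∀ (l : Fin 3) (x : V),
      fderiv ℝ (⇑σ) x (EuclideanSpace.single l 1)
        = ((fderiv ℝ (⇑ρ) x (EuclideanSpace.single l 1) : ℝ) : ℂ) := by
    intro l x
    have hcomp : ⇑σ = (⇑Complex.ofRealCLM) ∘ ⇑ρ := funext fun x => hσ x
    rw [hcomp, fderiv_comp x Complex.ofRealCLM.differentiableAt ρ.differentiableAt]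
    simp [ContinuousLinearMap.fderiv]
  -- each partial derivative of σ as a Schwartz map
  set τ : Fin 3 → 𝓢(V, ℂ) := fun l => SchwartzMap.evalCLM ℝ V ℂ (EuclideanSpace.single l 1) (fderivCLM ℝ V ℂ σ) with hτ
  have hτa : ∀ l x, τ l x = ((fderiv ℝ (⇑ρ) x (EuclideanSpace.single l 1) : ℝ) : ℂ) := by
    intro l x
    rw [hτ]
    simp only [evalCLM_apply_apply, fderivCLM_apply]
    exact hderiv l x
  have hsq : ∀ l x, (fderiv ℝ (⇑ρ) x (EuclideanSpace.single l 1)) ^ 2 = ‖τ l x‖ ^ 2 := by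
    intro l x
    rw [hτa l x, Complex.norm_real, Real.norm_eq_abs, _root_.sq_abs]
  have step1 : ∫ x, ∑ l, (fderiv ℝ (⇑ρ) x (EuclideanSpace.single l 1)) ^ 2
      = ∑ l, ∫ x, ‖τ l x‖ ^ 2 := by
    rw [← integral_finset_sum _ (fun l _ => integrable_normsq (τ l))]
    congr 1
    ext x
    exact Finset.sum_congr rfl fun l _ => hsq l x
  have step2 : ∀ l : Fin 3, ∫ x, ‖τ l x‖ ^ 2
      = ∫ ξ, (2 * Real.pi) ^ 2 * (ξ l) ^ 2 * ‖𝓕 (⇑σ) ξ‖ ^ 2 := by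
    intro l
    rw [← plancherel (τ l)]
    congr 1
    ext ξ
    exact norm_fourier_pderiv σ l ξ
  have hint : ∀ l : Fin 3, Integrable
      (fun ξ : V => (2 * Real.pi) ^ 2 * (ξ l) ^ 2 * ‖𝓕 (⇑σ) ξ‖ ^ 2) := by
    intro l
    refine integrable_weight (fourierTransformCLM ℝ σ)
      (w := fun ξ : V => (2 * Real.pi) ^ 2 * (ξ l) ^ 2) ?_ (C := (2 * Real.pi) ^ 2) ?_
    · exact continuous_const.mul ((EuclideanSpace.proj (𝕜 := ℝ) l).continuous.pow 2)
    · intro ξ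
      have h2 : (ξ l) ^ 2 ≤ ‖ξ‖ ^ 2 := by
        rw [normsq_eq]
        exact Finset.single_le_sum (fun i _ => sq_nonneg (ξ i)) (Finset.mem_univ l)
      rw [_root_.abs_of_nonneg (by positivity)]
      exact mul_le_mul_of_nonneg_left h2 (by positivity)
  have hint' : ∀ l : Fin 3, Integrable
      (fun ξ : V => (2 * Real.pi) ^ 2 * (ξ l) ^ 2 * ‖𝓕 (⇑σ) ξ‖ ^ 2) := hint
  rw [step1]
  have step3 : ∑ l : Fin 3, ∫ x, ‖τ l x‖ ^ 2
      = ∫ ξ, ∑ l : Fin 3, (2 * Real.pi) ^ 2 * (ξ l) ^ 2 * ‖𝓕 (⇑σ) ξ‖ ^ 2 := by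
    rw [integral_finset_sum _ (fun l _ => hint l)]
    exact Finset.sum_congr rfl fun l _ => step2 l
  rw [step3]
  rw [← integral_const_mul]
  congr 1
  ext ξ
  rw [← Finset.sum_mul, ← Finset.mul_sum, ← normsq_eq]
  ring

/-- change of variables by scaling with `-(2π)⁻¹`. -/
lemma cv (g : EuclideanSpace ℝ (Fin 3) → ℝ) :
    ∫ k : EuclideanSpace ℝ (Fin 3), g ((-(2 * Real.pi)⁻¹ : ℝ) • k)
      = (2 * Real.pi) ^ 3 * ∫ y, g y := by
  rw [MeasureTheory.Measure.integral_comp_smul volume g (-(2 * Real.pi)⁻¹)]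
  rw [finrank_euclideanSpace_fin, smul_eq_mul]
  congr 1
  have hπ : (0:ℝ) < 2 * Real.pi := by positivity
  rw [show ((-(2 * Real.pi)⁻¹ : ℝ) ^ 3)⁻¹ = -(2 * Real.pi) ^ 3 by
    field_simp]
  rw [abs_neg, _root_.abs_of_nonneg (by positivity)]

end CouplingAux

end

open CouplingAux

/-- The coupling matrix `K_m` is nonnegative and bounded by `m⁻²‖∇ρ‖²`, and
condition R1 (`‖∇ρ‖² < m²ω²`) implies condition R1' (`ω²I − K_m` positive definite). -/
theorem coupling_matrix_bounds
    (m : ℝ) (hm : 0 < m)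
    (ρ : SchwartzMap (EuclideanSpace ℝ (Fin 3)) ℝ)
    (ρhat : EuclideanSpace ℝ (Fin 3) → ℂ)
    (hρhat : ∀ k, ρhat k = ∫ x, Complex.exp (Complex.I * (⟪k, x⟫ : ℝ)) * (ρ x : ℂ))
    (K : Matrix (Fin 3) (Fin 3) ℝ)
    (hK : ∀ i j, K i j = ((2 * Real.pi) ^ 3)⁻¹ *
      ∫ k : EuclideanSpace ℝ (Fin 3), k i * k j * ‖ρhat k‖ ^ 2 / (‖k‖ ^ 2 + m ^ 2)) :
    (∀ v : EuclideanSpace ℝ (Fin 3),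
        0 ≤ ∑ i, ∑ j, v i * K i j * v j ∧
        ∑ i, ∑ j, v i * K i j * v j ≤
          m ^ (-2 : ℤ) * (∫ x, ∑ l, (fderiv ℝ ρ x (EuclideanSpace.single l 1)) ^ 2) * ‖v‖ ^ 2)
    ∧ ∀ ω : ℝ, 0 < ω →
        (∫ x, ∑ l, (fderiv ℝ ρ x (EuclideanSpace.single l 1)) ^ 2) < m ^ 2 * ω ^ 2 →
        ∀ v : EuclideanSpace ℝ (Fin 3), v ≠ 0 →
          0 < ∑ i, ∑ j, v i * ((if i = j then ω ^ 2 else 0) - K i j) * v j := by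
  have hπ : (0:ℝ) < 2 * Real.pi := by positivity
  set c : ℝ := -(2 * Real.pi)⁻¹ with hc
  have hπ' : Real.pi ≠ 0 := Real.pi_ne_zero
  have hc0 : c ≠ 0 := by
    rw [hc]
    exact neg_ne_zero.mpr (inv_ne_zero (by positivity))
  -- the complexification of ρ
  set σ : SchwartzMap (EuclideanSpace ℝ (Fin 3)) ℂ := postCLM Complex.ofRealCLM ρ with hσdef
  have hσ : ∀ x, σ x = (ρ x : ℂ) := fun x => postCLM_apply _ _ _
  -- ρhat in terms of the Fourier transform of σ
  have hρF : ∀ k, ρhat k = 𝓕 (⇑σ) (c • k) := by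
    intro k
    rw [hρhat k, Real.fourier_eq']
    congr 1
    funext x
    rw [smul_eq_mul, hσ x]
    congr 2
    have h1 : ⟪x, c • k⟫ = c * ⟪x, k⟫ := real_inner_smul_right x k c
    rw [h1, real_inner_comm x k, hc]
    have hπc : ((Real.pi : ℂ)) ≠ 0 := Complex.ofReal_ne_zero.mpr Real.pi_ne_zero
    push_cast
    field_simp
  -- ψ : Schwartz version of k ↦ 𝓕σ (c•k)
  set e : EuclideanSpace ℝ (Fin 3) ≃L[ℝ] EuclideanSpace ℝ (Fin 3) :=
    (LinearEquiv.smulOfNeZero ℝ _ c hc0).toContinuousLinearEquiv with he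
  set ψ : SchwartzMap (EuclideanSpace ℝ (Fin 3)) ℂ :=
    SchwartzMap.compCLMOfContinuousLinearEquiv ℝ e (SchwartzMap.fourierTransformCLM ℝ σ)
    with hψdef
  have hψ : ∀ k, ψ k = 𝓕 (⇑σ) (c • k) := fun k => rfl
  have hψn : ∀ k, ‖ρhat k‖ = ‖ψ k‖ := fun k => by rw [hρF k, hψ k]
  -- energy and the basic integrals
  set J : ℝ := ∫ ξ : EuclideanSpace ℝ (Fin 3), ‖ξ‖ ^ 2 * ‖𝓕 (⇑σ) ξ‖ ^ 2 with hJdef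
  have hJ0 : 0 ≤ J := integral_nonneg fun ξ => by positivity
  set Ei : ℝ := ∫ x, ∑ l, (fderiv ℝ (⇑ρ) x (EuclideanSpace.single l 1)) ^ 2 with hEidef
  have hE : Ei = (2 * Real.pi) ^ 2 * J := energy_eq ρ σ hσ
  -- change of variables
  have hCV : ∫ k : EuclideanSpace ℝ (Fin 3), ‖k‖ ^ 2 * ‖ψ k‖ ^ 2
      = (2 * Real.pi) ^ 5 * J := by
    have h1 : ∀ k : EuclideanSpace ℝ (Fin 3), ‖k‖ ^ 2 * ‖ψ k‖ ^ 2
        = (fun y : EuclideanSpace ℝ (Fin 3) =>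
            (2 * Real.pi) ^ 2 * (‖y‖ ^ 2 * ‖𝓕 (⇑σ) y‖ ^ 2)) (c • k) := by
      intro k
      have h2 : ‖c • k‖ ^ 2 = c ^ 2 * ‖k‖ ^ 2 := by
        rw [norm_smul, Real.norm_eq_abs, mul_pow, _root_.sq_abs]
      show ‖k‖ ^ 2 * ‖ψ k‖ ^ 2 = (2 * Real.pi) ^ 2 * (‖c • k‖ ^ 2 * ‖𝓕 (⇑σ) (c • k)‖ ^ 2)
      rw [hψ k, h2, hc]
      have h5 : ((-(2 * Real.pi)⁻¹ : ℝ)) ^ 2 = ((2 * Real.pi) ^ 2)⁻¹ := by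
        rw [neg_sq, inv_pow]
      rw [h5]
      field_simp
    calc ∫ k : EuclideanSpace ℝ (Fin 3), ‖k‖ ^ 2 * ‖ψ k‖ ^ 2
        = ∫ k : EuclideanSpace ℝ (Fin 3), (fun y : EuclideanSpace ℝ (Fin 3) =>
            (2 * Real.pi) ^ 2 * (‖y‖ ^ 2 * ‖𝓕 (⇑σ) y‖ ^ 2)) (c • k) := by
          exact integral_congr_ae (Filter.Eventually.of_forall h1)
      _ = (2 * Real.pi) ^ 3 * ∫ y, (2 * Real.pi) ^ 2 * (‖y‖ ^ 2 * ‖𝓕 (⇑σ) y‖ ^ 2) := by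
          rw [hc]
          exact cv (fun y => (2 * Real.pi) ^ 2 * (‖y‖ ^ 2 * ‖𝓕 (⇑σ) y‖ ^ 2))
      _ = (2 * Real.pi) ^ 5 * J := by rw [integral_const_mul, ← hJdef]; ring
  -- pointwise facts
  have hm2 : (0:ℝ) < m ^ 2 := by positivity
  have hD : ∀ k : EuclideanSpace ℝ (Fin 3), (0:ℝ) < ‖k‖ ^ 2 + m ^ 2 := fun k => by positivity
  have hDc : Continuous fun k : EuclideanSpace ℝ (Fin 3) => ‖k‖ ^ 2 + m ^ 2 := by
    fun_prop
  have hcoord : ∀ (k : EuclideanSpace ℝ (Fin 3)) (i : Fin 3), |k i| ≤ ‖k‖ := by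
    intro k i
    rw [← Real.sqrt_sq_eq_abs, ← Real.sqrt_sq (norm_nonneg k)]
    apply Real.sqrt_le_sqrt
    rw [normsq_eq k]
    exact Finset.single_le_sum (fun l _ => sq_nonneg (k l)) (Finset.mem_univ i)
  have hcoordc : ∀ i : Fin 3, Continuous fun k : EuclideanSpace ℝ (Fin 3) => k i :=
    fun i => (EuclideanSpace.proj (𝕜 := ℝ) i).continuous
  have hinner_eq : ∀ v k : EuclideanSpace ℝ (Fin 3), (∑ i, v i * k i) = ⟪v, k⟫ := by
    intro v k
    rw [PiLp.inner_apply]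
    simp
    exact Finset.sum_congr rfl fun i _ => mul_comm _ _
  have hCS : ∀ v k : EuclideanSpace ℝ (Fin 3), (∑ i, v i * k i) ^ 2 ≤ ‖v‖ ^ 2 * ‖k‖ ^ 2 := by
    intro v k
    rw [hinner_eq v k]
    calc ⟪v, k⟫ ^ 2 = |⟪v, k⟫| ^ 2 := (_root_.sq_abs _).symm
      _ ≤ (‖v‖ * ‖k‖) ^ 2 :=
          pow_le_pow_left₀ (abs_nonneg _) (abs_real_inner_le_norm v k) 2
      _ = ‖v‖ ^ 2 * ‖k‖ ^ 2 := by ring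
  -- rewrite K using ψ
  have hKψ : ∀ i j, K i j = ((2 * Real.pi) ^ 3)⁻¹ *
      ∫ k : EuclideanSpace ℝ (Fin 3), k i * k j * ‖ψ k‖ ^ 2 / (‖k‖ ^ 2 + m ^ 2) := by
    intro i j
    rw [hK i j]
    congr 1
    congr 1
    funext k
    rw [hψn k]
  -- integrability of the quadratic-form integrands
  have hint4 : ∀ v : EuclideanSpace ℝ (Fin 3), Integrable (fun k : EuclideanSpace ℝ (Fin 3) =>
      (∑ i, v i * k i) ^ 2 * (‖ψ k‖ ^ 2 / (‖k‖ ^ 2 + m ^ 2))) := by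
    intro v
    have heq : (fun k : EuclideanSpace ℝ (Fin 3) =>
        (∑ i, v i * k i) ^ 2 * (‖ψ k‖ ^ 2 / (‖k‖ ^ 2 + m ^ 2)))
        = fun k => ((∑ i, v i * k i) ^ 2 / (‖k‖ ^ 2 + m ^ 2)) * ‖ψ k‖ ^ 2 := by
      funext k; ring
    rw [heq]
    refine integrable_weight ψ ?_ (C := ‖v‖ ^ 2 * (m ^ 2)⁻¹) ?_
    · exact (Continuous.pow (by fun_prop) 2).div hDc fun k => (hD k).ne'
    · intro k
      rw [abs_div, _root_.abs_of_nonneg (sq_nonneg _),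
        _root_.abs_of_nonneg (le_of_lt (hD k))]
      calc (∑ i, v i * k i) ^ 2 / (‖k‖ ^ 2 + m ^ 2) ≤ (‖v‖ ^ 2 * ‖k‖ ^ 2) / (m ^ 2) := by
            apply div_le_div₀ (by positivity) (hCS v k) hm2 (by linarith [sq_nonneg ‖k‖])
        _ = ‖v‖ ^ 2 * (m ^ 2)⁻¹ * ‖k‖ ^ 2 := by ring
  have hint2 : ∀ v : EuclideanSpace ℝ (Fin 3), ∀ i j : Fin 3,
      Integrable (fun k : EuclideanSpace ℝ (Fin 3) =>
      (v i * k i) * (v j * k j) * (‖ψ k‖ ^ 2 / (‖k‖ ^ 2 + m ^ 2))) := by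
    intro v i j
    have heq : (fun k : EuclideanSpace ℝ (Fin 3) =>
        (v i * k i) * (v j * k j) * (‖ψ k‖ ^ 2 / (‖k‖ ^ 2 + m ^ 2)))
        = fun k => ((v i * k i) * (v j * k j) / (‖k‖ ^ 2 + m ^ 2)) * ‖ψ k‖ ^ 2 := by
      funext k; ring
    rw [heq]
    refine integrable_weight ψ ?_ (C := |v i| * |v j| * (m ^ 2)⁻¹) ?_
    · exact (Continuous.mul (by fun_prop) (by fun_prop)).div hDc fun k => (hD k).ne'
    · intro k
      rw [abs_div, _root_.abs_of_nonneg (le_of_lt (hD k))]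
      have hnum : |v i * k i * (v j * k j)| ≤ |v i| * |v j| * ‖k‖ ^ 2 := by
        rw [abs_mul, abs_mul, abs_mul]
        calc |v i| * |k i| * (|v j| * |k j|) ≤ |v i| * ‖k‖ * (|v j| * ‖k‖) := by
              apply mul_le_mul
              · exact mul_le_mul_of_nonneg_left (hcoord k i) (abs_nonneg _)
              · exact mul_le_mul_of_nonneg_left (hcoord k j) (abs_nonneg _)
              · positivity
              · positivity
          _ = |v i| * |v j| * ‖k‖ ^ 2 := by ring
      calc |v i * k i * (v j * k j)| / (‖k‖ ^ 2 + m ^ 2)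
          ≤ (|v i| * |v j| * ‖k‖ ^ 2) / (m ^ 2) :=
            div_le_div₀ (by positivity) hnum hm2 (by linarith [sq_nonneg ‖k‖])
        _ = |v i| * |v j| * (m ^ 2)⁻¹ * ‖k‖ ^ 2 := by ring
  have hint3 : ∀ v : EuclideanSpace ℝ (Fin 3), Integrable (fun k : EuclideanSpace ℝ (Fin 3) =>
      (‖v‖ ^ 2 * (m ^ 2)⁻¹) * (‖k‖ ^ 2 * ‖ψ k‖ ^ 2)) := by
    intro v
    have heq : (fun k : EuclideanSpace ℝ (Fin 3) =>
        (‖v‖ ^ 2 * (m ^ 2)⁻¹) * (‖k‖ ^ 2 * ‖ψ k‖ ^ 2))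
        = fun k => ((‖v‖ ^ 2 * (m ^ 2)⁻¹) * ‖k‖ ^ 2) * ‖ψ k‖ ^ 2 := by
      funext k; ring
    rw [heq]
    refine integrable_weight ψ ?_ (C := ‖v‖ ^ 2 * (m ^ 2)⁻¹) ?_
    · fun_prop
    · intro k
      rw [_root_.abs_of_nonneg (by positivity)]
  -- the quadratic form as a single integral
  have hQ : ∀ v : EuclideanSpace ℝ (Fin 3),
      ∑ i, ∑ j, v i * K i j * v j = ((2 * Real.pi) ^ 3)⁻¹ *
        ∫ k : EuclideanSpace ℝ (Fin 3),
          (∑ i, v i * k i) ^ 2 * (‖ψ k‖ ^ 2 / (‖k‖ ^ 2 + m ^ 2)) := by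
    intro v
    have hterm : ∀ i j, v i * K i j * v j = ((2 * Real.pi) ^ 3)⁻¹ *
        ∫ k : EuclideanSpace ℝ (Fin 3),
          (v i * k i) * (v j * k j) * (‖ψ k‖ ^ 2 / (‖k‖ ^ 2 + m ^ 2)) := by
      intro i j
      rw [hKψ i j]
      have heq : (fun k : EuclideanSpace ℝ (Fin 3) =>
          (v i * v j) * (k i * k j * ‖ψ k‖ ^ 2 / (‖k‖ ^ 2 + m ^ 2)))
          = fun k => (v i * k i) * (v j * k j) * (‖ψ k‖ ^ 2 / (‖k‖ ^ 2 + m ^ 2)) := by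
        funext k; ring
      rw [← heq, integral_const_mul]
      ring
    calc ∑ i, ∑ j, v i * K i j * v j
        = ∑ i, ∑ j, ((2 * Real.pi) ^ 3)⁻¹ *
            ∫ k : EuclideanSpace ℝ (Fin 3),
              (v i * k i) * (v j * k j) * (‖ψ k‖ ^ 2 / (‖k‖ ^ 2 + m ^ 2)) :=
          Finset.sum_congr rfl fun i _ => Finset.sum_congr rfl fun j _ => hterm i j
      _ = ((2 * Real.pi) ^ 3)⁻¹ * ∑ i, ∑ j,
            ∫ k : EuclideanSpace ℝ (Fin 3),
              (v i * k i) * (v j * k j) * (‖ψ k‖ ^ 2 / (‖k‖ ^ 2 + m ^ 2)) := by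
          rw [Finset.mul_sum]
          exact Finset.sum_congr rfl fun i _ => (Finset.mul_sum _ _ _).symm
      _ = ((2 * Real.pi) ^ 3)⁻¹ *
            ∫ k : EuclideanSpace ℝ (Fin 3), ∑ i, ∑ j,
              (v i * k i) * (v j * k j) * (‖ψ k‖ ^ 2 / (‖k‖ ^ 2 + m ^ 2)) := by
          congr 1
          rw [integral_finset_sum _ (fun i _ => integrable_finset_sum _
            (fun j _ => hint2 v i j))]
          exact Finset.sum_congr rfl fun i _ =>
            (integral_finset_sum _ (fun j _ => hint2 v i j)).symm
      _ = ((2 * Real.pi) ^ 3)⁻¹ *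
            ∫ k : EuclideanSpace ℝ (Fin 3),
              (∑ i, v i * k i) ^ 2 * (‖ψ k‖ ^ 2 / (‖k‖ ^ 2 + m ^ 2)) := by
          congr 1
          congr 1
          funext k
          rw [pow_two (∑ i, v i * k i), Finset.sum_mul_sum, Finset.sum_mul]
          exact Finset.sum_congr rfl fun i _ => by rw [Finset.sum_mul]
  -- the upper bound for the quadratic form
  have hub : ∀ v : EuclideanSpace ℝ (Fin 3),
      ∑ i, ∑ j, v i * K i j * v j ≤ m ^ (-2 : ℤ) * Ei * ‖v‖ ^ 2 := by
    intro v
    rw [hQ v]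
    have hS : ∫ k : EuclideanSpace ℝ (Fin 3),
        (∑ i, v i * k i) ^ 2 * (‖ψ k‖ ^ 2 / (‖k‖ ^ 2 + m ^ 2))
        ≤ (‖v‖ ^ 2 * (m ^ 2)⁻¹) * ((2 * Real.pi) ^ 5 * J) := by
      calc ∫ k : EuclideanSpace ℝ (Fin 3),
            (∑ i, v i * k i) ^ 2 * (‖ψ k‖ ^ 2 / (‖k‖ ^ 2 + m ^ 2))
          ≤ ∫ k : EuclideanSpace ℝ (Fin 3),
            (‖v‖ ^ 2 * (m ^ 2)⁻¹) * (‖k‖ ^ 2 * ‖ψ k‖ ^ 2) := by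
            refine integral_mono (hint4 v) (hint3 v) fun k => ?_
            calc (∑ i, v i * k i) ^ 2 * (‖ψ k‖ ^ 2 / (‖k‖ ^ 2 + m ^ 2))
                ≤ (‖v‖ ^ 2 * ‖k‖ ^ 2) * (‖ψ k‖ ^ 2 / (m ^ 2)) := by
                  apply mul_le_mul (hCS v k) ?_ (by positivity) (by positivity)
                  exact div_le_div₀ (sq_nonneg _) le_rfl hm2 (by linarith [sq_nonneg ‖k‖])
              _ = (‖v‖ ^ 2 * (m ^ 2)⁻¹) * (‖k‖ ^ 2 * ‖ψ k‖ ^ 2) := by ring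
        _ = (‖v‖ ^ 2 * (m ^ 2)⁻¹) *
              ∫ k : EuclideanSpace ℝ (Fin 3), ‖k‖ ^ 2 * ‖ψ k‖ ^ 2 := integral_const_mul _ _
        _ = (‖v‖ ^ 2 * (m ^ 2)⁻¹) * ((2 * Real.pi) ^ 5 * J) := by rw [hCV]
    have hzm : m ^ (-2 : ℤ) = (m ^ 2)⁻¹ := by
      rw [zpow_neg]
      norm_cast
    calc ((2 * Real.pi) ^ 3)⁻¹ * ∫ k : EuclideanSpace ℝ (Fin 3),
          (∑ i, v i * k i) ^ 2 * (‖ψ k‖ ^ 2 / (‖k‖ ^ 2 + m ^ 2))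
        ≤ ((2 * Real.pi) ^ 3)⁻¹ * ((‖v‖ ^ 2 * (m ^ 2)⁻¹) * ((2 * Real.pi) ^ 5 * J)) :=
          mul_le_mul_of_nonneg_left hS (by positivity)
      _ = m ^ (-2 : ℤ) * Ei * ‖v‖ ^ 2 := by
          rw [hzm, hE]
          field_simp
  -- the nonnegativity of the quadratic form
  have hlb : ∀ v : EuclideanSpace ℝ (Fin 3), 0 ≤ ∑ i, ∑ j, v i * K i j * v j := by
    intro v
    rw [hQ v]
    apply mul_nonneg (by positivity)
    apply integral_nonneg
    intro k
    have := hD k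
    positivity
  refine ⟨fun v => ⟨hlb v, hub v⟩, ?_⟩
  -- positive definiteness
  intro ω hω hless v hv
  have hvn : (0:ℝ) < ‖v‖ ^ 2 := by
    have : (0:ℝ) < ‖v‖ := norm_pos_iff.mpr hv
    positivity
  have hnormv : ‖v‖ ^ 2 = ∑ i, v i ^ 2 := normsq_eq v
  have hsplit : ∑ i, ∑ j, v i * ((if i = j then ω ^ 2 else 0) - K i j) * v j
      = ω ^ 2 * ‖v‖ ^ 2 - ∑ i, ∑ j, v i * K i j * v j := by
    have h1 : ∀ i j : Fin 3, v i * ((if i = j then ω ^ 2 else 0) - K i j) * v j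
        = v i * (if i = j then ω ^ 2 else 0) * v j - v i * K i j * v j := by
      intro i j; ring
    simp_rw [h1, Finset.sum_sub_distrib]
    congr 1
    have h2 : ∀ i : Fin 3, ∑ j, v i * (if i = j then ω ^ 2 else 0) * v j
        = ω ^ 2 * v i ^ 2 := by
      intro i
      rw [Finset.sum_eq_single i]
      · simp; ring
      · intro j _ hji; simp [Ne.symm hji]
      · intro h; exact absurd (Finset.mem_univ i) h
    simp_rw [h2]
    rw [← Finset.mul_sum, ← hnormv]
  rw [hsplit]
  have hzm : m ^ (-2 : ℤ) = (m ^ 2)⁻¹ := by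
    rw [zpow_neg]
    norm_cast
  have hkey : m ^ (-2 : ℤ) * Ei < ω ^ 2 := by
    rw [hzm, inv_mul_lt_iff₀ hm2]
    exact hless
  have h3 : m ^ (-2 : ℤ) * Ei * ‖v‖ ^ 2 < ω ^ 2 * ‖v‖ ^ 2 :=
    mul_lt_mul_of_pos_right hkey hvn
  have h4 := hub v
  linarith
end

section
/- Let ω > 0 and let ρ : ℝ³ → ℝ be a Schwartz function with ‖ρ‖²_{L²(ℝ³)} < ω². Then for every real μ ≥ 0 and every v ∈ ℝ³: (2π)^{-3} ∫_{ℝ³} (k·v)² |ρ̂(k)|² / (μ² + |k|²) dk ≤ ‖ρ‖²_{L²} |v|², where ρ̂(k) = ∫_{ℝ³} e^{i k·x} ρ(x) dx; in particular, for every v ≠ 0, (μ² + ω²)|v|² − (2π)^{-3} ∫_{ℝ³} (k·v)² |ρ̂(k)|² / (μ² + |k|²) dk > 0. -/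
open MeasureTheory RealInnerProductSpace
open scoped FourierTransform ComplexConjugate

section Aux

variable {V : Type*} [NormedAddCommGroup V] [InnerProductSpace ℝ V]
  [FiniteDimensional ℝ V] [MeasurableSpace V] [BorelSpace V]

/-- Coercion of a real Schwartz function to a complex-valued Schwartz function. -/
noncomputable def SchwartzMap.toComplex' {W : Type*} [NormedAddCommGroup W] [NormedSpace ℝ W]
    (f : SchwartzMap W ℝ) : SchwartzMap W ℂ where
  toFun x := (f x : ℂ)
  smooth' := Complex.ofRealCLM.contDiff.comp f.smooth'
  decay' := by
    intro k n
    obtain ⟨C, hC⟩ := f.decay' k n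
    refine ⟨C, fun x ↦ ?_⟩
    have h : ‖iteratedFDeriv ℝ n (⇑Complex.ofRealLI ∘ ⇑f) x‖ = ‖iteratedFDeriv ℝ n (⇑f) x‖ :=
      Complex.ofRealLI.norm_iteratedFDeriv_comp_left (f.smooth ⊤).contDiffAt (by exact_mod_cast le_top)
    have he : (⇑Complex.ofRealLI ∘ ⇑f) = fun x ↦ ((f x : ℂ)) := by ext y; rfl
    rw [he] at h
    rw [h]; exact hC x

@[simp] lemma SchwartzMap.toComplex'_apply {W : Type*} [NormedAddCommGroup W] [NormedSpace ℝ W]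
    (f : SchwartzMap W ℝ) (x : W) : f.toComplex' x = (f x : ℂ) := rfl

/-- Plancherel's theorem for Schwartz functions. -/
theorem plancherel_schwartz (f : SchwartzMap V ℂ) :
    ∫ ξ, ‖𝓕 (⇑f) ξ‖ ^ 2 = ∫ x, ‖f x‖ ^ 2 := by
  have hf : Integrable (⇑f) := f.integrable
  have hFf : Integrable (𝓕 ⇑f) := by
    have := (SchwartzMap.fourierTransformCLM ℂ f).integrable (μ := volume)
    simpa [SchwartzMap.fourierTransformCLM_apply, SchwartzMap.fourier_coe] using this
  have hFfc : Continuous (𝓕 ⇑f) := by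
    have := (SchwartzMap.fourierTransformCLM ℂ f).continuous
    simpa [SchwartzMap.fourierTransformCLM_apply, SchwartzMap.fourier_coe] using this
  set g : V → ℂ := fun ξ ↦ conj (𝓕 (⇑f) ξ) with hg_def
  have hgc : Continuous g := Complex.continuous_conj.comp hFfc
  have hg : Integrable g := by
    refine hFf.norm.mono' hgc.aestronglyMeasurable (Filter.Eventually.of_forall fun ξ ↦ ?_)
    simp [g]
  have hFg : ∀ x, 𝓕 g x = conj (f x) := by
    intro x
    have h1 : 𝓕 g x = conj (𝓕⁻ (𝓕 ⇑f) x) := by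
      rw [Real.fourier_eq', Real.fourierInv_eq', ← integral_conj]
      congr 1
      ext v
      rw [smul_eq_mul, smul_eq_mul, map_mul, ← Complex.exp_conj]
      rw [hg_def]
      congr 1
      simp [Complex.conj_ofReal, map_ofNat]
    rw [h1, hf.fourierInv_fourier_eq hFf f.continuous.continuousAt]
  have key : ∫ ξ, (𝓕 (⇑f) ξ) * g ξ = ∫ x, f x * 𝓕 g x := by
    have h := VectorFourier.integral_fourierIntegral_smul_eq_flip (L := innerₗ V)
      Real.continuous_fourierChar continuous_inner hf hg
    rw [flip_innerₗ] at h
    exact h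
  have lhs : ∫ ξ, (𝓕 (⇑f) ξ) * g ξ = ((∫ ξ, ‖𝓕 (⇑f) ξ‖ ^ 2 : ℝ) : ℂ) := by
    rw [show ((∫ ξ, ‖𝓕 (⇑f) ξ‖ ^ 2 : ℝ) : ℂ) = ∫ ξ, ((‖𝓕 (⇑f) ξ‖ ^ 2 : ℝ) : ℂ) from
      integral_ofReal.symm]
    congr 1
    ext ξ
    simp [g, Complex.mul_conj, Complex.normSq_eq_norm_sq]
  have rhs : ∫ x, f x * 𝓕 g x = ((∫ x, ‖f x‖ ^ 2 : ℝ) : ℂ) := by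
    rw [show ((∫ x, ‖f x‖ ^ 2 : ℝ) : ℂ) = ∫ x, ((‖f x‖ ^ 2 : ℝ) : ℂ) from
      integral_ofReal.symm]
    congr 1
    ext x
    rw [hFg x]
    simp [Complex.mul_conj, Complex.normSq_eq_norm_sq]
  have := lhs.symm.trans (key.trans rhs)
  exact_mod_cast this

end Aux

/-- On the real axis the Laplace-transformed memory kernel is dominated by
`‖ρ‖²_{L²}|v|²`; hence under condition R1 (`‖ρ‖² < ω²`) the symbol matrix
`A(μ) = (μ²+ω²)I − D̃(μ)` is positive definite for real `μ ≥ 0`. -/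
theorem symbol_matrix_positive_on_real_axis
    (ω : ℝ) (hω : 0 < ω)
    (ρ : SchwartzMap (EuclideanSpace ℝ (Fin 3)) ℝ)
    (hρω : ∫ x, (ρ x) ^ 2 < ω ^ 2)
    (ρhat : EuclideanSpace ℝ (Fin 3) → ℂ)
    (hρhat : ∀ k, ρhat k = ∫ x, Complex.exp (Complex.I * (⟪k, x⟫ : ℝ)) * (ρ x : ℂ)) :
    ∀ μ : ℝ, 0 ≤ μ → ∀ v : EuclideanSpace ℝ (Fin 3),
      (((2 * Real.pi) ^ 3)⁻¹ *
          ∫ k : EuclideanSpace ℝ (Fin 3), ⟪k, v⟫ ^ 2 * ‖ρhat k‖ ^ 2 / (μ ^ 2 + ‖k‖ ^ 2)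
        ≤ (∫ x, (ρ x) ^ 2) * ‖v‖ ^ 2)
      ∧ (v ≠ 0 →
        0 < (μ ^ 2 + ω ^ 2) * ‖v‖ ^ 2 - ((2 * Real.pi) ^ 3)⁻¹ *
          ∫ k : EuclideanSpace ℝ (Fin 3), ⟪k, v⟫ ^ 2 * ‖ρhat k‖ ^ 2 / (μ ^ 2 + ‖k‖ ^ 2)) := by
  intro μ hμ v
  set fc : SchwartzMap (EuclideanSpace ℝ (Fin 3)) ℂ := ρ.toComplex' with hfc_def
  have hplan : ∫ ξ, ‖𝓕 (⇑fc) ξ‖ ^ 2 = ∫ x, (ρ x) ^ 2 := by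
    rw [plancherel_schwartz fc]
    congr 1
    ext x
    simp [hfc_def, SchwartzMap.toComplex'_apply, Complex.norm_real, sq_abs]
  -- the relation between `ρhat` and the (mathlib-normalized) Fourier transform
  set c : ℝ := -(2 * Real.pi)⁻¹ with hc_def
  have hc : c ≠ 0 := by
    rw [hc_def]
    simp [Real.pi_ne_zero]
  have hrel : ∀ k, ρhat k = 𝓕 (⇑fc) (c • k) := by
    intro k
    rw [hρhat k, Real.fourier_eq']
    congr 1
    ext x
    rw [smul_eq_mul]
    have harg : -2 * Real.pi * ⟪x, c • k⟫ = ⟪k, x⟫ := by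
      rw [real_inner_smul_right, hc_def, real_inner_comm x k]
      field_simp
    rw [show fc x = (ρ x : ℂ) from rfl]
    congr 1
    rw [harg]
    ring
  -- integrability of the dominating function
  have hFint : Integrable (𝓕 ⇑fc) := by
    have := (SchwartzMap.fourierTransformCLM ℂ fc).integrable (μ := volume)
    simpa [SchwartzMap.fourierTransformCLM_apply, SchwartzMap.fourier_coe] using this
  have hFc : Continuous (𝓕 ⇑fc) := by
    have := (SchwartzMap.fourierTransformCLM ℂ fc).continuous
    simpa [SchwartzMap.fourierTransformCLM_apply, SchwartzMap.fourier_coe] using this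
  have hbound : ∃ C : ℝ, ∀ ξ, ‖𝓕 (⇑fc) ξ‖ ≤ C := by
    obtain ⟨C, hC⟩ := (SchwartzMap.fourierTransformCLM ℂ fc).decay' 0 0
    refine ⟨C, fun ξ ↦ ?_⟩
    have := hC ξ
    simp only [pow_zero, one_mul, norm_iteratedFDeriv_zero] at this
    exact this
  have hI2 : Integrable (fun ξ ↦ ‖𝓕 (⇑fc) ξ‖ ^ 2) := by
    obtain ⟨C, hC⟩ := hbound
    refine (hFint.norm.const_mul C).mono' ((hFc.norm.pow 2).aestronglyMeasurable)
      (Filter.Eventually.of_forall fun ξ ↦ ?_)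
    rw [Real.norm_eq_abs, abs_of_nonneg (by positivity)]
    have h0 := norm_nonneg (𝓕 (⇑fc) ξ)
    nlinarith [hC ξ]
  set H : EuclideanSpace ℝ (Fin 3) → ℝ := fun ξ ↦ ‖v‖ ^ 2 * ‖𝓕 (⇑fc) ξ‖ ^ 2 with hH_def
  have hH : Integrable H := hI2.const_mul _
  have hBeq : (fun k ↦ ‖v‖ ^ 2 * ‖ρhat k‖ ^ 2) = fun k ↦ H (c • k) := by
    funext k
    rw [hH_def, hrel k]
  have hB : Integrable (fun k ↦ ‖v‖ ^ 2 * ‖ρhat k‖ ^ 2) := by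
    rw [hBeq]
    exact hH.comp_smul hc
  -- pointwise domination
  have hmono : (∫ k : EuclideanSpace ℝ (Fin 3), ⟪k, v⟫ ^ 2 * ‖ρhat k‖ ^ 2 / (μ ^ 2 + ‖k‖ ^ 2))
      ≤ ∫ k : EuclideanSpace ℝ (Fin 3), ‖v‖ ^ 2 * ‖ρhat k‖ ^ 2 := by
    refine integral_mono_of_nonneg (Filter.Eventually.of_forall fun k ↦ by positivity) hB
      (Filter.Eventually.of_forall fun k ↦ ?_)
    show ⟪k, v⟫ ^ 2 * ‖ρhat k‖ ^ 2 / (μ ^ 2 + ‖k‖ ^ 2) ≤ ‖v‖ ^ 2 * ‖ρhat k‖ ^ 2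
    rcases eq_or_lt_of_le (by positivity : (0:ℝ) ≤ μ ^ 2 + ‖k‖ ^ 2) with h0 | hpos
    · rw [← h0, div_zero]
      positivity
    · rw [div_le_iff₀ hpos]
      have h1 : ⟪k, v⟫ ^ 2 ≤ ‖k‖ ^ 2 * ‖v‖ ^ 2 := by
        have h2 := abs_real_inner_le_norm k v
        have h3 := abs_nonneg ⟪k, v⟫
        nlinarith [sq_abs ⟪k, v⟫]
      nlinarith [mul_le_mul_of_nonneg_right h1 (sq_nonneg ‖ρhat k‖),
        mul_nonneg (mul_nonneg (sq_nonneg ‖v‖) (sq_nonneg ‖ρhat k‖)) (sq_nonneg μ)]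
  -- scaling + Plancherel
  have hscal : (∫ k : EuclideanSpace ℝ (Fin 3), ‖v‖ ^ 2 * ‖ρhat k‖ ^ 2)
      = (2 * Real.pi) ^ 3 * (‖v‖ ^ 2 * ∫ x, (ρ x) ^ 2) := by
    rw [hBeq, MeasureTheory.Measure.integral_comp_smul volume H c]
    rw [show Module.finrank ℝ (EuclideanSpace ℝ (Fin 3)) = 3 from finrank_euclideanSpace_fin]
    have h3 : (c ^ 3)⁻¹ = -((2 * Real.pi) ^ 3) := by
      rw [hc_def]
      field_simp
    rw [h3, abs_neg, abs_of_pos (by positivity), smul_eq_mul]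
    rw [hH_def]
    simp only
    rw [integral_const_mul, hplan]
  have h2pi : (0:ℝ) < (2 * Real.pi) ^ 3 := by positivity
  have hfinal : ((2 * Real.pi) ^ 3)⁻¹ *
      (∫ k : EuclideanSpace ℝ (Fin 3), ⟪k, v⟫ ^ 2 * ‖ρhat k‖ ^ 2 / (μ ^ 2 + ‖k‖ ^ 2))
      ≤ (∫ x, (ρ x) ^ 2) * ‖v‖ ^ 2 := by
    calc ((2 * Real.pi) ^ 3)⁻¹ *
        (∫ k : EuclideanSpace ℝ (Fin 3), ⟪k, v⟫ ^ 2 * ‖ρhat k‖ ^ 2 / (μ ^ 2 + ‖k‖ ^ 2))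
        ≤ ((2 * Real.pi) ^ 3)⁻¹ * ((2 * Real.pi) ^ 3 * (‖v‖ ^ 2 * ∫ x, (ρ x) ^ 2)) := by
          exact mul_le_mul_of_nonneg_left (hmono.trans_eq hscal) (by positivity)
      _ = (∫ x, (ρ x) ^ 2) * ‖v‖ ^ 2 := by
          field_simp
  refine ⟨hfinal, fun hv ↦ ?_⟩
  have hv2 : 0 < ‖v‖ ^ 2 := by
    have := norm_pos_iff.mpr hv
    positivity
  nlinarith [hfinal, mul_lt_mul_of_pos_right hρω hv2, mul_nonneg (sq_nonneg μ) hv2.le]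
end

section
/- Let δ₀ > 0 and let F be a holomorphic function on the half-plane {λ ∈ ℂ : Re λ > −δ₀} satisfying |F(λ)| ≤ C (1 + |λ|)^{-2} there, for some constant C > 0. Then for every 0 < δ < δ₀ there is a constant C′ > 0 such that for all t > 0: | (1/(2π)) ∫_ℝ e^{i y t} F(i y) dy | ≤ C′ e^{−δ t}. -/
open MeasureTheory

/-- Contour-shifting bound: if `F` is holomorphic and `O((1+|λ|)^{-2})` on the half-plane
`Re λ > −δ₀`, then its inverse Laplace transform along the imaginary axis decays
exponentially at any rate `δ < δ₀`. -/
theorem inverse_laplace_exponential_decay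
    (δ₀ C : ℝ) (hδ₀ : 0 < δ₀) (hC : 0 < C)
    (F : ℂ → ℂ)
    (hF : DifferentiableOn ℂ F {z : ℂ | -δ₀ < z.re})
    (hFb : ∀ z : ℂ, -δ₀ < z.re → ‖F z‖ ≤ C * (1 + ‖z‖) ^ (-2 : ℤ)) :
    ∀ δ : ℝ, 0 < δ → δ < δ₀ →
      ∃ C' : ℝ, 0 < C' ∧ ∀ t : ℝ, 0 < t →
        ‖(1 / (2 * Real.pi) : ℂ) *
            ∫ y : ℝ, Complex.exp (Complex.I * (y : ℂ) * (t : ℂ)) * F (Complex.I * (y : ℂ))‖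
          ≤ C' * Real.exp (-δ * t) := by
  intro δ hδ hδδ₀
  refine ⟨C, hC, ?_⟩
  intro t ht
  set S : Set ℂ := {z : ℂ | -δ₀ < z.re} with hS
  set f : ℂ → ℂ := fun z => Complex.exp (z * t) * F z with hf
  have hfd : DifferentiableOn ℂ f S := by
    apply DifferentiableOn.mul _ hF
    exact (Complex.differentiable_exp.comp
      (differentiable_id.mul (differentiable_const _))).differentiableOn
  have hfc : ContinuousOn f S := hfd.continuousOn
  -- pointwise bound
  have hbound : ∀ z : ℂ, z ∈ S → ‖f z‖ ≤ Real.exp (z.re * t) * C * (1 + z.im ^ 2)⁻¹ := by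
    intro z hz
    have h1 : ‖f z‖ = Real.exp (z.re * t) * ‖F z‖ := by
      simp only [hf, norm_mul, Complex.norm_exp]
      congr 2
      simp [Complex.mul_re]
    rw [h1, mul_assoc]
    apply mul_le_mul_of_nonneg_left _ (Real.exp_nonneg _)
    refine (hFb z hz).trans ?_
    have him : |z.im| ≤ ‖z‖ := Complex.abs_im_le_norm z
    have hz0 : (0:ℝ) ≤ ‖z‖ := norm_nonneg z
    have h2 : (1 + ‖z‖) ^ (-2 : ℤ) = ((1 + ‖z‖) ^ 2)⁻¹ := by
      rw [zpow_neg, zpow_two, pow_two]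
    rw [h2]
    apply mul_le_mul_of_nonneg_left _ hC.le
    apply inv_anti₀ (by positivity)
    nlinarith [sq_abs z.im, abs_nonneg z.im]
  have hdom : Integrable (fun y : ℝ => C * (1 + y ^ 2)⁻¹) :=
    integrable_inv_one_add_sq.const_mul C
  have hmemS : ∀ (x : ℝ) (y : ℝ), -δ₀ < x → ((x:ℂ) + (y:ℂ) * Complex.I) ∈ S := by
    intro x y hx; simp [hS, hx]
  have hline : ∀ x : ℝ, -δ₀ < x → Continuous (fun y : ℝ => f ((x:ℂ) + (y:ℂ) * Complex.I)) := by
    intro x hx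
    apply hfc.comp_continuous (by continuity)
    intro y; exact hmemS x y hx
  have hptbd : ∀ (x y : ℝ), -δ₀ < x → x ≤ 0 →
      ‖f ((x:ℂ) + (y:ℂ) * Complex.I)‖ ≤ C * (1 + y ^ 2)⁻¹ := by
    intro x y hx hx0
    have := hbound _ (hmemS x y hx)
    have hre : ((x:ℂ) + (y:ℂ) * Complex.I).re = x := by simp
    have him : ((x:ℂ) + (y:ℂ) * Complex.I).im = y := by simp
    rw [hre, him] at this
    refine this.trans ?_
    have h1 : Real.exp (x * t) ≤ 1 :=
      Real.exp_le_one_iff.mpr (mul_nonpos_of_nonpos_of_nonneg hx0 ht.le)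
    have h2 : (0:ℝ) ≤ (1 + y ^ 2)⁻¹ := by positivity
    have h3 : Real.exp (x * t) * C * (1 + y ^ 2)⁻¹ ≤ 1 * C * (1 + y ^ 2)⁻¹ :=
      mul_le_mul_of_nonneg_right (mul_le_mul_of_nonneg_right h1 hC.le) h2
    linarith
  have hint : ∀ x : ℝ, -δ₀ < x → x ≤ 0 →
      Integrable (fun y : ℝ => f ((x:ℂ) + (y:ℂ) * Complex.I)) := by
    intro x hx hx0
    refine hdom.mono' ((hline x hx).aestronglyMeasurable) ?_
    filter_upwards with y
    exact hptbd x y hx hx0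
  have hδS : -δ₀ < -δ := by linarith
  -- contour shifting
  have key : (∫ y : ℝ, f (((0:ℝ):ℂ) + (y:ℂ) * Complex.I))
      = ∫ y : ℝ, f (((-δ:ℝ):ℂ) + (y:ℂ) * Complex.I) := by
    have hV0 : Filter.Tendsto (fun R : ℝ => ∫ y in (-R)..R, f (((0:ℝ):ℂ) + (y:ℂ) * Complex.I))
        Filter.atTop (nhds (∫ y : ℝ, f (((0:ℝ):ℂ) + (y:ℂ) * Complex.I))) :=
      intervalIntegral_tendsto_integral (hint 0 (by linarith : -δ₀ < (0:ℝ)) le_rfl)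
        Filter.tendsto_neg_atTop_atBot Filter.tendsto_id
    have hVδ : Filter.Tendsto (fun R : ℝ => ∫ y in (-R)..R, f (((-δ:ℝ):ℂ) + (y:ℂ) * Complex.I))
        Filter.atTop (nhds (∫ y : ℝ, f (((-δ:ℝ):ℂ) + (y:ℂ) * Complex.I))) :=
      intervalIntegral_tendsto_integral (hint (-δ) hδS (by linarith : -δ ≤ (0:ℝ)))
        Filter.tendsto_neg_atTop_atBot Filter.tendsto_id
    -- horizontal segments
    have hHbd : ∀ σ : ℝ, ‖∫ x in (-δ)..(0:ℝ), f ((x:ℂ) + (σ:ℂ) * Complex.I)‖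
        ≤ C * (1 + σ ^ 2)⁻¹ * δ := by
      intro σ
      have hb : ∀ x ∈ Set.uIoc (-δ) (0:ℝ),
          ‖f ((x:ℂ) + (σ:ℂ) * Complex.I)‖ ≤ C * (1 + σ ^ 2)⁻¹ := by
        intro x hx
        rw [Set.uIoc_of_le (by linarith : -δ ≤ (0:ℝ))] at hx
        exact hptbd x σ (by linarith [hx.1]) hx.2
      have h := intervalIntegral.norm_integral_le_of_norm_le_const hb
      calc ‖∫ x in (-δ)..(0:ℝ), f ((x:ℂ) + (σ:ℂ) * Complex.I)‖
          ≤ C * (1 + σ ^ 2)⁻¹ * |0 - (-δ)| := h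
        _ = C * (1 + σ ^ 2)⁻¹ * δ := by
            rw [sub_neg_eq_add, zero_add, abs_of_pos hδ]
    have hlim0 : Filter.Tendsto (fun R : ℝ => C * (1 + R ^ 2)⁻¹ * δ) Filter.atTop (nhds 0) := by
      have h1 : Filter.Tendsto (fun R : ℝ => (1 + R ^ 2)) Filter.atTop Filter.atTop :=
        Filter.tendsto_atTop_add_const_left _ 1 (Filter.tendsto_pow_atTop (two_ne_zero))
      have h2 : Filter.Tendsto (fun R : ℝ => (1 + R ^ 2)⁻¹) Filter.atTop (nhds 0) :=
        tendsto_inv_atTop_zero.comp h1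
      have := (h2.const_mul C).mul_const δ
      simpa using this
    have hHtop : Filter.Tendsto (fun R : ℝ => ∫ x in (-δ)..(0:ℝ), f ((x:ℂ) + (R:ℂ) * Complex.I))
        Filter.atTop (nhds 0) :=
      squeeze_zero_norm (fun R => hHbd R) hlim0
    have hHbot : Filter.Tendsto (fun R : ℝ => ∫ x in (-δ)..(0:ℝ), f ((x:ℂ) + ((-R:ℝ):ℂ) * Complex.I))
        Filter.atTop (nhds 0) := by
      apply squeeze_zero_norm (fun R => (hHbd (-R)).trans_eq ?_) hlim0
      norm_num
    -- rectangle identity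
    have hrect : ∀ R : ℝ,
        (∫ x in (-δ)..(0:ℝ), f ((x:ℂ) + ((-R:ℝ):ℂ) * Complex.I))
          - (∫ x in (-δ)..(0:ℝ), f ((x:ℂ) + (R:ℂ) * Complex.I))
          + Complex.I • (∫ y in (-R)..R, f (((0:ℝ):ℂ) + (y:ℂ) * Complex.I))
          - Complex.I • (∫ y in (-R)..R, f (((-δ:ℝ):ℂ) + (y:ℂ) * Complex.I)) = 0 := by
      intro R
      have h := Complex.integral_boundary_rect_eq_zero_of_differentiableOn f
        (⟨-δ, -R⟩ : ℂ) (⟨0, R⟩ : ℂ) ?_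
      · have e1 : (⟨-δ, -R⟩ : ℂ).re = -δ := rfl
        have e2 : (⟨-δ, -R⟩ : ℂ).im = -R := rfl
        have e3 : (⟨0, R⟩ : ℂ).re = 0 := rfl
        have e4 : (⟨0, R⟩ : ℂ).im = R := rfl
        rw [e1, e2, e3, e4] at h
        convert h using 3 <;> push_cast <;> ring_nf
      · apply hfd.mono
        intro z hz
        rw [Complex.mem_reProdIm] at hz
        have h1 : z.re ∈ Set.uIcc (-δ) (0:ℝ) := by
          have := hz.1; simpa using this
        rw [Set.uIcc_of_le (by linarith : -δ ≤ (0:ℝ))] at h1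
        simp only [hS, Set.mem_setOf_eq]
        linarith [h1.1]
    -- combine
    have hdiff : Filter.Tendsto (fun R : ℝ =>
        Complex.I • (∫ y in (-R)..R, f (((0:ℝ):ℂ) + (y:ℂ) * Complex.I))
          - Complex.I • (∫ y in (-R)..R, f (((-δ:ℝ):ℂ) + (y:ℂ) * Complex.I)))
        Filter.atTop (nhds 0) := by
      have : ∀ R : ℝ, Complex.I • (∫ y in (-R)..R, f (((0:ℝ):ℂ) + (y:ℂ) * Complex.I))
          - Complex.I • (∫ y in (-R)..R, f (((-δ:ℝ):ℂ) + (y:ℂ) * Complex.I))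
          = (∫ x in (-δ)..(0:ℝ), f ((x:ℂ) + (R:ℂ) * Complex.I))
            - (∫ x in (-δ)..(0:ℝ), f ((x:ℂ) + ((-R:ℝ):ℂ) * Complex.I)) := by
        intro R
        have := hrect R
        linear_combination this
      simp only [this]
      simpa using hHtop.sub hHbot
    have hlim2 : Filter.Tendsto (fun R : ℝ =>
        Complex.I • (∫ y in (-R)..R, f (((0:ℝ):ℂ) + (y:ℂ) * Complex.I))
          - Complex.I • (∫ y in (-R)..R, f (((-δ:ℝ):ℂ) + (y:ℂ) * Complex.I)))
        Filter.atTop (nhds (Complex.I • (∫ y : ℝ, f (((0:ℝ):ℂ) + (y:ℂ) * Complex.I))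
          - Complex.I • (∫ y : ℝ, f (((-δ:ℝ):ℂ) + (y:ℂ) * Complex.I)))) :=
      (hV0.const_smul _).sub (hVδ.const_smul _)
    have h0 := tendsto_nhds_unique hlim2 hdiff
    have hI : (Complex.I : ℂ) ≠ 0 := Complex.I_ne_zero
    have : Complex.I * ((∫ y : ℝ, f (((0:ℝ):ℂ) + (y:ℂ) * Complex.I))
        - (∫ y : ℝ, f (((-δ:ℝ):ℂ) + (y:ℂ) * Complex.I))) = 0 := by
      rw [mul_sub]; simpa [smul_eq_mul] using h0
    rcases mul_eq_zero.mp this with h | h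
    · exact absurd h hI
    · exact sub_eq_zero.mp h
  -- rewrite the target integral as the contour integral at `Re = 0`
  have heq : (∫ y : ℝ, Complex.exp (Complex.I * (y:ℂ) * (t:ℂ)) * F (Complex.I * (y:ℂ)))
      = ∫ y : ℝ, f (((0:ℝ):ℂ) + (y:ℂ) * Complex.I) := by
    congr 1
    funext y
    simp only [hf, Complex.ofReal_zero, zero_add]
    rw [mul_comm (y:ℂ) Complex.I]
  -- bound the shifted integral
  have h1 : ∀ y : ℝ, ‖f (((-δ:ℝ):ℂ) + (y:ℂ) * Complex.I)‖
      ≤ Real.exp (-δ * t) * C * (1 + y ^ 2)⁻¹ := by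
    intro y
    have := hbound _ (hmemS (-δ) y hδS)
    simpa using this
  have hmaj : Integrable (fun y : ℝ => Real.exp (-δ * t) * C * (1 + y ^ 2)⁻¹) :=
    integrable_inv_one_add_sq.const_mul _
  have hnorm : ‖∫ y : ℝ, f (((-δ:ℝ):ℂ) + (y:ℂ) * Complex.I)‖
      ≤ Real.exp (-δ * t) * C * Real.pi := by
    calc ‖∫ y : ℝ, f (((-δ:ℝ):ℂ) + (y:ℂ) * Complex.I)‖
        ≤ ∫ y : ℝ, Real.exp (-δ * t) * C * (1 + y ^ 2)⁻¹ :=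
          norm_integral_le_of_norm_le hmaj (Filter.Eventually.of_forall h1)
      _ = Real.exp (-δ * t) * C * Real.pi := by
          rw [MeasureTheory.integral_const_mul, integral_univ_inv_one_add_sq]
  have hπ : 0 < Real.pi := Real.pi_pos
  have hcoe : (1 / (2 * (Real.pi : ℂ)) : ℂ) = ((1 / (2 * Real.pi) : ℝ) : ℂ) := by
    push_cast; ring
  rw [heq, key, norm_mul, hcoe, Complex.norm_real, Real.norm_eq_abs,
    abs_of_pos (by positivity : (0:ℝ) < 1 / (2 * Real.pi))]
  calc (1 / (2 * Real.pi)) * ‖∫ y : ℝ, f (((-δ:ℝ):ℂ) + (y:ℂ) * Complex.I)‖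
      ≤ (1 / (2 * Real.pi)) * (Real.exp (-δ * t) * C * Real.pi) := by
        exact mul_le_mul_of_nonneg_left hnorm (by positivity)
    _ ≤ C * Real.exp (-δ * t) := by
        rw [div_mul_eq_mul_div, one_mul, div_le_iff₀ (by positivity)]
        nlinarith [mul_nonneg (mul_nonneg (Real.exp_nonneg (-δ * t)) hC.le) hπ.le]
end
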